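/- Let k be a nonnegative integer, let G be one of the five separable extension graphs P_4, P (the banner: a four-cycle with one pendant vertex), F (the chair: a path on four vertices with one extra vertex adjacent to a middle vertex of the path), complement(P), or complement(F), and let H = (S,K,R) be a G-spider with nonempty head R. Then H is not a minimal (1,k)-polar obstruction. -/

import Mathlib

open SimpleGraph

universe u v

/-! ### Basic predicates -/

/-- `B` induces a disjoint union of complete graphs in `G` (i.e. `G[B]` is a cluster). -/
def IsClusterSet {V : Type*} (G : SimpleGraph V) (B : Set V) : Prop :=
  ∀ ⦃u w x : V⦄, u ∈ B → w ∈ B → x ∈ B → G.Adj u w → G.Adj w x → u ≠ x → G.Adj u x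

/-- `A` induces a complete multipartite graph in `G`
(the complement of `G[A]` is a disjoint union of cliques). -/
def IsCompleteMultipartiteSet {V : Type*} (G : SimpleGraph V) (A : Set V) : Prop :=
  ∀ ⦃u w x : V⦄, u ∈ A → w ∈ A → x ∈ A → u ≠ w → w ≠ x → u ≠ x →
    ¬ G.Adj u w → ¬ G.Adj w x → ¬ G.Adj u x

/-- `A` is an independent set of `G`. -/
def IsIndepSet {V : Type*} (G : SimpleGraph V) (A : Set V) : Prop :=
  ∀ ⦃u w : V⦄, u ∈ A → w ∈ A → ¬ G.Adj u w

/-- `G[B]` is a disjoint union of at most `k` complete graphs. -/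
def IsClusterSetLE {V : Type*} (G : SimpleGraph V) (k : ℕ) (B : Set V) : Prop :=
  ∃ g : B → Fin k, ∀ u w : B, u ≠ w → (G.Adj u w ↔ g u = g w)

/-- `G[A]` is a complete multipartite graph with at most `s` parts. -/
def IsCompleteMultipartiteSetLE {V : Type*} (G : SimpleGraph V) (s : ℕ) (A : Set V) : Prop :=
  ∃ f : A → Fin s, ∀ u w : A, G.Adj u w ↔ f u ≠ f w

/-! ### Polarity properties -/

/-- `G` is unipolar: a partition `(A, Aᶜ)` with `A` a clique and `G[Aᶜ]` a cluster. -/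
def Unipolar {V : Type*} (G : SimpleGraph V) : Prop :=
  ∃ A : Set V, G.IsClique A ∧ IsClusterSet G Aᶜ

/-- `G` is monopolar ((1,∞)-polar). -/
def Monopolar {V : Type*} (G : SimpleGraph V) : Prop :=
  ∃ A : Set V, _root_.IsIndepSet G A ∧ IsClusterSet G Aᶜ

/-- `G` is polar ((∞,∞)-polar). -/
def Polar {V : Type*} (G : SimpleGraph V) : Prop :=
  ∃ A : Set V, IsCompleteMultipartiteSet G A ∧ IsClusterSet G Aᶜ

/-- `G` is (s,1)-polar. -/
def SOnePolar {V : Type*} (s : ℕ) (G : SimpleGraph V) : Prop :=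
  ∃ A : Set V, IsCompleteMultipartiteSetLE G s A ∧ G.IsClique Aᶜ

/-- `G` is (∞,1)-polar. -/
def InfOnePolar {V : Type*} (G : SimpleGraph V) : Prop :=
  ∃ A : Set V, IsCompleteMultipartiteSet G A ∧ G.IsClique Aᶜ

/-- `G` is (1,k)-polar. -/
def OneKPolar {V : Type*} (k : ℕ) (G : SimpleGraph V) : Prop :=
  ∃ A : Set V, _root_.IsIndepSet G A ∧ IsClusterSetLE G k Aᶜ

/-! ### Minimal obstructions -/

def MinUnipolarObstruction {V : Type*} (G : SimpleGraph V) : Prop :=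
  ¬ Unipolar G ∧ ∀ s : Set V, s ≠ Set.univ → Unipolar (G.induce s)

def MinMonopolarObstruction {V : Type*} (G : SimpleGraph V) : Prop :=
  ¬ Monopolar G ∧ ∀ s : Set V, s ≠ Set.univ → Monopolar (G.induce s)

def MinPolarObstruction {V : Type*} (G : SimpleGraph V) : Prop :=
  ¬ Polar G ∧ ∀ s : Set V, s ≠ Set.univ → Polar (G.induce s)

def MinSOnePolarObstruction {V : Type*} (s : ℕ) (G : SimpleGraph V) : Prop :=
  ¬ SOnePolar s G ∧ ∀ t : Set V, t ≠ Set.univ → SOnePolar s (G.induce t)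

def MinInfOnePolarObstruction {V : Type*} (G : SimpleGraph V) : Prop :=
  ¬ InfOnePolar G ∧ ∀ t : Set V, t ≠ Set.univ → InfOnePolar (G.induce t)

def MinOneKPolarObstruction {V : Type*} (k : ℕ) (G : SimpleGraph V) : Prop :=
  ¬ OneKPolar k G ∧ ∀ t : Set V, t ≠ Set.univ → OneKPolar k (G.induce t)

/-! ### Graph constructions -/

/-- The join of two graphs: all edges added between the summands. -/
def joinG {α β : Type*} (G : SimpleGraph α) (H : SimpleGraph β) : SimpleGraph (α ⊕ β) where
  Adj x y := (G ⊕g H).Adj x y ∨ (x.isLeft ∧ y.isRight) ∨ (x.isRight ∧ y.isLeft)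
  symm := ⟨fun x y h => by
    rcases h with h | ⟨h1, h2⟩ | ⟨h1, h2⟩
    · exact Or.inl ((G ⊕g H).symm.symm x y h)
    · exact Or.inr (Or.inr ⟨h2, h1⟩)
    · exact Or.inr (Or.inl ⟨h2, h1⟩)⟩
  loopless := ⟨fun x h => by
    rcases h with h | ⟨h1, h2⟩ | ⟨h1, h2⟩
    · exact (G ⊕g H).loopless.irrefl x h
    · cases x <;> simp_all
    · cases x <;> simp_all⟩

/-- `K_n`, the complete graph on `n` vertices. -/
def KG (n : ℕ) : SimpleGraph (Fin n) := ⊤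

/-- `n K_1`, the edgeless graph on `n` vertices. -/
def EG (n : ℕ) : SimpleGraph (Fin n) := ⊥

/-- The banner graph `P`: a four-cycle `0 1 2 3` with a pendant vertex `4` adjacent to `0`. -/
def banner : SimpleGraph (Fin 5) :=
  SimpleGraph.fromEdgeSet {s(0, 1), s(1, 2), s(2, 3), s(3, 0), s(0, 4)}

/-- The chair (fork) graph `F`: a path `0 1 2 3` with an extra vertex `4` adjacent to `1`. -/
def chair : SimpleGraph (Fin 5) :=
  SimpleGraph.fromEdgeSet {s(0, 1), s(1, 2), s(2, 3), s(1, 4)}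

/-- `2P_3`. -/
def twoP3 : SimpleGraph (Fin 3 ⊕ Fin 3) := pathGraph 3 ⊕g pathGraph 3

/-- `K_{2,3}`. -/
def K23 : SimpleGraph (Fin 2 ⊕ Fin 3) := completeBipartiteGraph (Fin 2) (Fin 3)

/-- The seven graphs `E1, E2, E3, E7, E10, E11, E12`. -/
def E1 : SimpleGraph (Fin 1 ⊕ (Fin 2 ⊕ Fin 2)) := KG 1 ⊕g (KG 2 ⊕g KG 2)
def E2 : SimpleGraph (Fin 3 ⊕ Fin 3) := pathGraph 3 ⊕g pathGraph 3
def E3 : SimpleGraph (Fin 4 ⊕ Fin 2) := cycleGraph 4 ⊕g EG 2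
def E7 : SimpleGraph (Fin 1 ⊕ (Fin 3 ⊕ Fin 2)) := KG 1 ⊕g (pathGraph 3 ⊕g KG 2)ᶜ
def E10 : SimpleGraph (Fin 1 ⊕ Fin 5) := KG 1 ⊕g cycleGraph 5
def E11 : SimpleGraph (Fin 1 ⊕ Fin 5) := KG 1 ⊕g banner
def E12 : SimpleGraph (Fin 1 ⊕ Fin 5) := KG 1 ⊕g (pathGraph 5)ᶜ

/-! ### P4 structure -/

/-- `W` induces a path on four vertices in `G`. -/
def InducesP4 {V : Type*} (G : SimpleGraph V) (W : Set V) : Prop :=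
  Nonempty (G.induce W ≃g pathGraph 4)

/-- A graph is a cograph if it has no induced `P_4`. -/
def Cograph {V : Type*} (G : SimpleGraph V) : Prop :=
  ∀ W : Set V, ¬ InducesP4 G W

/-- `G` is `P_4`-sparse: any five vertices induce at most one `P_4`. -/
def P4Sparse {V : Type*} (G : SimpleGraph V) : Prop :=
  ∀ s : Set V, s.ncard = 5 → ∀ W₁ W₂ : Set V, W₁ ⊆ s → W₂ ⊆ s →
    InducesP4 G W₁ → InducesP4 G W₂ → W₁ = W₂

/-- `G` is `P_4`-extendible. -/
def P4Extendible {V : Type*} (G : SimpleGraph V) : Prop :=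
  ∀ W : Set V, InducesP4 G W →
    ∀ v₁ v₂ : V, v₁ ∉ W → v₂ ∉ W →
      (∃ W₁ : Set V, InducesP4 G W₁ ∧ v₁ ∈ W₁ ∧ (W₁ ∩ W).Nonempty) →
      (∃ W₂ : Set V, InducesP4 G W₂ ∧ v₂ ∈ W₂ ∧ (W₂ ∩ W).Nonempty) → v₁ = v₂

/-! ### Spiders -/

/-- `(S, K, R)` is a spider partition of `G`. -/
def IsSpiderPartition {V : Type*} (G : SimpleGraph V) (S K R : Set V) : Prop :=
  S ∪ K ∪ R = Set.univ ∧ Disjoint S K ∧ Disjoint S R ∧ Disjoint K R ∧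
  S.ncard = K.ncard ∧ 2 ≤ K.ncard ∧
  G.IsClique K ∧ _root_.IsIndepSet G S ∧
  (∃ f : S → K, Function.Bijective f ∧
    ((∀ s : S, ∀ k : K, G.Adj s k ↔ (f s : V) = k) ∨
     (∀ s : S, ∀ k : K, G.Adj s k ↔ (f s : V) ≠ k))) ∧
  (∀ r ∈ R, ∀ k ∈ K, G.Adj r k) ∧
  (∀ r ∈ R, ∀ s ∈ S, ¬ G.Adj r s)

/-- `G` is a `B`-spider with partition `(S, K, R)`, where `B` is a fixed base graph with
midpoint set `M` and endpoint set `E`: `G` is obtained from a copy of `B` (whose midpoints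
form `K` and whose endpoints form `S`) by adding the set `R` of vertices, each adjacent to
all midpoints and to no endpoint. -/
def IsBaseSpider {n : ℕ} {V : Type*} (B : SimpleGraph (Fin n)) (M E : Set (Fin n))
    (G : SimpleGraph V) (S K R : Set V) : Prop :=
  ∃ f : Fin n → V, Function.Injective f ∧
    (∀ i j : Fin n, G.Adj (f i) (f j) ↔ B.Adj i j) ∧
    K = f '' M ∧ S = f '' E ∧ R = (Set.range f)ᶜ ∧
    (∀ r ∈ R, ∀ x ∈ K, G.Adj r x) ∧
    (∀ r ∈ R, ∀ x ∈ S, ¬ G.Adj r x)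

section Aux

variable {V : Type*}

/-- A single clique `C` with independent complement gives a `(1,k)`-polar partition. -/
lemma clique_partition (k : ℕ) (H : SimpleGraph V) (C : Set V) (hk : 1 ≤ k)
    (hC : ∀ u ∈ C, ∀ w ∈ C, u ≠ w → H.Adj u w)
    (hI : ∀ u ∈ Cᶜ, ∀ w ∈ Cᶜ, ¬ H.Adj u w) :
    OneKPolar k H := by
  refine ⟨Cᶜ, fun u w hu hw => hI u hu w hw, ?_⟩
  rw [compl_compl]
  exact ⟨fun _ => ⟨0, hk⟩, fun u w hne =>
    ⟨fun _ => rfl, fun _ => hC u.1 u.2 w.1 w.2 (fun e => hne (Subtype.ext e))⟩⟩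

/-- Key extension lemma: if `sstar` has unique neighbour `mstar` and in the
"`mstar` on the independent side" branch we can always rebuild a `(1,k)`-polar
partition of `H`, then `H` is not a minimal `(1,k)`-polar obstruction. -/
lemma extend_key [Fintype V] (k : ℕ) (H : SimpleGraph V) (sstar mstar : V)
    (hnbr : ∀ v, H.Adj sstar v ↔ v = mstar)
    (hbranch : ∀ A B : Set V,
      (∀ v : V, v ≠ sstar → v ∈ A ∨ v ∈ B) →
      mstar ∈ A →
      _root_.IsIndepSet H A →
      (∀ u w x, u ∈ B → w ∈ B → x ∈ B → H.Adj u w → H.Adj w x → u ≠ x → H.Adj u x) →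
      (∀ b, b ∈ B → 1 ≤ k) →
      OneKPolar k H) :
    ¬ MinOneKPolarObstruction k H := by
  rintro ⟨hnp, hall⟩
  have hsm : sstar ≠ mstar := by
    intro e
    exact H.irrefl ((hnbr sstar).mpr e)
  set t : Set V := {sstar}ᶜ with ht
  have htmem : ∀ v : V, v ∈ t ↔ v ≠ sstar := by
    intro v; simp [ht]
  have htu : t ≠ Set.univ := by
    intro e
    have h1 : sstar ∈ t := e ▸ Set.mem_univ sstar
    exact ((htmem sstar).mp h1) rfl
  obtain ⟨A, hA, g, hg⟩ := hall t htu
  have hmt : mstar ∈ t := (htmem mstar).mpr (Ne.symm hsm)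
  by_cases hmA : (⟨mstar, hmt⟩ : t) ∈ A
  · -- mstar on the independent side: use hbranch
    refine hnp (hbranch {v : V | ∃ h : v ∈ t, (⟨v, h⟩ : t) ∈ A}
      {v : V | ∃ h : v ∈ t, (⟨v, h⟩ : t) ∉ A} ?_ ?_ ?_ ?_ ?_)
    · intro v hv
      have hvt : v ∈ t := (htmem v).mpr hv
      by_cases hva : (⟨v, hvt⟩ : t) ∈ A
      · exact Or.inl ⟨hvt, hva⟩
      · exact Or.inr ⟨hvt, hva⟩
    · exact ⟨hmt, hmA⟩
    · rintro u w ⟨hu, pu⟩ ⟨hw, pw⟩ hadj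
      exact hA pu pw hadj
    · rintro u w x ⟨hu, pu⟩ ⟨hw, pw⟩ ⟨hx, px⟩ auw awx hux
      have hne1 : (⟨⟨u, hu⟩, pu⟩ : ↥(Aᶜ)) ≠ ⟨⟨w, hw⟩, pw⟩ := by
        intro e
        exact H.ne_of_adj auw (congrArg (fun z : ↥(Aᶜ) => (z.1.1 : V)) e)
      have hne2 : (⟨⟨w, hw⟩, pw⟩ : ↥(Aᶜ)) ≠ ⟨⟨x, hx⟩, px⟩ := by
        intro e
        exact H.ne_of_adj awx (congrArg (fun z : ↥(Aᶜ) => (z.1.1 : V)) e)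
      have hne3 : (⟨⟨u, hu⟩, pu⟩ : ↥(Aᶜ)) ≠ ⟨⟨x, hx⟩, px⟩ := by
        intro e
        exact hux (congrArg (fun z : ↥(Aᶜ) => (z.1.1 : V)) e)
      have h1 := (hg ⟨⟨u, hu⟩, pu⟩ ⟨⟨w, hw⟩, pw⟩ hne1).mp auw
      have h2 := (hg ⟨⟨w, hw⟩, pw⟩ ⟨⟨x, hx⟩, px⟩ hne2).mp awx
      exact (hg ⟨⟨u, hu⟩, pu⟩ ⟨⟨x, hx⟩, px⟩ hne3).mpr (h1.trans h2)
    · rintro b ⟨hb, pb⟩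
      exact (g ⟨⟨b, hb⟩, pb⟩).pos
  · -- mstar on the cluster side: add sstar to the independent side
    apply hnp
    set A₀ : Set V := {v : V | ∃ h : v ∈ t, (⟨v, h⟩ : t) ∈ A} ∪ {sstar} with hA₀
    have hmemA₀ : ∀ v : V, v ∈ A₀ ↔ ((∃ h : v ∈ t, (⟨v, h⟩ : t) ∈ A) ∨ v = sstar) := by
      intro v
      rw [hA₀]
      simp only [Set.mem_union, Set.mem_setOf_eq, Set.mem_singleton_iff]
    refine ⟨A₀, ?_, ?_⟩
    · intro u w hu hw hadj
      rcases (hmemA₀ u).mp hu with ⟨hut, pu⟩ | hue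
      · rcases (hmemA₀ w).mp hw with ⟨hwt, pw⟩ | hwe
        · exact hA pu pw hadj
        · have h1 : H.Adj sstar u := (hwe ▸ hadj).symm
          have h2 : u = mstar := (hnbr u).mp h1
          subst h2
          exact hmA pu
      · rcases (hmemA₀ w).mp hw with ⟨hwt, pw⟩ | hwe
        · have h1 : H.Adj sstar w := hue ▸ hadj
          have h2 : w = mstar := (hnbr w).mp h1
          subst h2
          exact hmA pw
        · exact H.irrefl (hue ▸ hwe ▸ hadj)
    · have hc1 : ∀ v : V, v ∈ A₀ᶜ → v ∈ t := by
        intro v hv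
        refine (htmem v).mpr (fun e => hv ((hmemA₀ v).mpr (Or.inr e)))
      have hc2 : ∀ (v : V) (hv : v ∈ A₀ᶜ), (⟨v, hc1 v hv⟩ : t) ∈ Aᶜ := by
        intro v hv pA
        exact hv ((hmemA₀ v).mpr (Or.inl ⟨hc1 v hv, pA⟩))
      refine ⟨fun x => g ⟨⟨x.1, hc1 x.1 x.2⟩, hc2 x.1 x.2⟩, ?_⟩
      intro u w hne
      exact hg ⟨⟨u.1, hc1 u.1 u.2⟩, hc2 u.1 u.2⟩ ⟨⟨w.1, hc1 w.1 w.2⟩, hc2 w.1 w.2⟩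
        (fun e => hne (Subtype.ext (congrArg (fun z : ↥(Aᶜ) => (z.1.1 : V)) e)))

/-- Unique-neighbour fact for a spider endpoint. -/
lemma spider_nbr {n : ℕ} (H : SimpleGraph V) (Bg : SimpleGraph (Fin n))
    (f : Fin n → V) (hfi : Function.Injective f)
    (hAdj : ∀ i j, H.Adj (f i) (f j) ↔ Bg.Adj i j)
    (R : Set V) (hRdef : R = (Set.range f)ᶜ)
    (i₀ j₀ : Fin n)
    (hRS : ∀ r ∈ R, ¬ H.Adj r (f i₀))
    (hbase : ∀ j, Bg.Adj i₀ j ↔ j = j₀) :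
    ∀ v, H.Adj (f i₀) v ↔ v = f j₀ := by
  intro v
  by_cases hv : v ∈ Set.range f
  · obtain ⟨j, rfl⟩ := hv
    rw [hAdj, hbase]
    exact ⟨congrArg f, fun e => hfi e⟩
  · have hvR : v ∈ R := by rw [hRdef]; exact hv
    constructor
    · intro hadj
      exact absurd hadj.symm (hRS v hvR)
    · rintro rfl
      exact absurd ⟨j₀, rfl⟩ hv

/-- The constructive branch, shared by the `P₄`, chair and chair-complement cases. -/
lemma constructive_branch {n : ℕ} (k : ℕ) (H : SimpleGraph V)
    (Bg : SimpleGraph (Fin n)) (M : Set (Fin n))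
    (f : Fin n → V) (hfi : Function.Injective f)
    (hAdj : ∀ i j, H.Adj (f i) (f j) ↔ Bg.Adj i j)
    (R : Set V) (hRdef : R = (Set.range f)ᶜ)
    (hRK : ∀ r ∈ R, ∀ i ∈ M, H.Adj r (f i))
    (m₀ i₁ i₀ : Fin n) (hm₀ : m₀ ∈ M) (hi₁ : i₁ ∈ M)
    (hMadj : ∀ i ∈ M, ∀ j ∈ M, i ≠ j → Bg.Adj i j)
    (hEind : ∀ i, i ∉ M → ∀ j, j ∉ M → ¬ Bg.Adj i j)
    (hi₁₀ : i₁ ≠ i₀) (hadj₁m : Bg.Adj i₁ m₀)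
    (A B : Set V)
    (hcov : ∀ v : V, v ≠ f i₀ → v ∈ A ∨ v ∈ B)
    (hmA : f m₀ ∈ A)
    (hindep : _root_.IsIndepSet H A)
    (htrans : ∀ u w x, u ∈ B → w ∈ B → x ∈ B → H.Adj u w → H.Adj w x → u ≠ x → H.Adj u x)
    (hkB : ∀ b, b ∈ B → 1 ≤ k) :
    OneKPolar k H := by
  have hadj1m : H.Adj (f i₁) (f m₀) := (hAdj _ _).mpr hadj₁m
  have hf1B : f i₁ ∈ B := by
    rcases hcov (f i₁) (fun e => hi₁₀ (hfi e)) with h | h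
    · exact absurd hadj1m (hindep h hmA)
    · exact h
  have hRB : ∀ x ∈ R, x ∈ B := by
    intro x hx
    have hxr : x ∉ Set.range f := by rw [hRdef] at hx; exact hx
    have hadj : H.Adj x (f m₀) := hRK x hx m₀ hm₀
    rcases hcov x (fun e => hxr (e ▸ ⟨i₀, rfl⟩)) with h | h
    · exact absurd hadj (hindep h hmA)
    · exact h
  have hRcl : ∀ x ∈ R, ∀ y ∈ R, x ≠ y → H.Adj x y := by
    intro x hx y hy hne
    exact htrans x (f i₁) y (hRB x hx) hf1B (hRB y hy)
      (hRK x hx i₁ hi₁) ((hRK y hy i₁ hi₁).symm) hne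
  refine clique_partition k H (f '' M ∪ R) (hkB _ hf1B) ?_ ?_
  · rintro u hu w hw hne
    rcases hu with ⟨i, hi, rfl⟩ | hu
    · rcases hw with ⟨j, hj, rfl⟩ | hw
      · exact (hAdj i j).mpr (hMadj i hi j hj (fun e => hne (congrArg f e)))
      · exact (hRK w hw i hi).symm
    · rcases hw with ⟨j, hj, rfl⟩ | hw
      · exact hRK u hu j hj
      · exact hRcl u hu w hw hne
  · intro u hu w hw hadj
    have hu' : u ∉ f '' M ∧ u ∉ R := by
      constructor <;> intro hmem
      · exact hu (Or.inl hmem)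
      · exact hu (Or.inr hmem)
    have hw' : w ∉ f '' M ∧ w ∉ R := by
      constructor <;> intro hmem
      · exact hw (Or.inl hmem)
      · exact hw (Or.inr hmem)
    have hur : u ∈ Set.range f := by
      have h2 := hu'.2; rw [hRdef] at h2; exact not_not.mp h2
    have hwr : w ∈ Set.range f := by
      have h2 := hw'.2; rw [hRdef] at h2; exact not_not.mp h2
    obtain ⟨i, rfl⟩ := hur
    obtain ⟨j, rfl⟩ := hwr
    have hiM : i ∉ M := fun hmem => hu'.1 ⟨i, hmem, rfl⟩
    have hjM : j ∉ M := fun hmem => hw'.1 ⟨j, hmem, rfl⟩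
    exact hEind i hiM j hjM ((hAdj i j).mp hadj)

end Aux


section Concrete

lemma p4_base : ∀ j : Fin 4, (pathGraph 4).Adj 3 j ↔ j = 2 := by
  intro j; fin_cases j <;> simp [pathGraph_adj] <;> decide

lemma p4_madj : ∀ i ∈ ({1, 2} : Set (Fin 4)), ∀ j ∈ ({1, 2} : Set (Fin 4)),
    i ≠ j → (pathGraph 4).Adj i j := by
  intro i hi j hj hne
  simp only [Set.mem_insert_iff, Set.mem_singleton_iff] at hi hj
  rcases hi with rfl | rfl <;> rcases hj with rfl | rfl <;>
    first
      | exact absurd rfl hne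
      | simp [pathGraph_adj]

lemma p4_eind : ∀ i, i ∉ ({1, 2} : Set (Fin 4)) → ∀ j, j ∉ ({1, 2} : Set (Fin 4)) →
    ¬ (pathGraph 4).Adj i j := by
  intro i hi j hj
  fin_cases i <;> fin_cases j <;>
    simp_all [pathGraph_adj, Set.mem_insert_iff, Set.mem_singleton_iff] <;> omega

lemma p4_12 : (pathGraph 4).Adj 1 2 := by simp [pathGraph_adj]

lemma banner_base : ∀ j : Fin 5, banner.Adj 4 j ↔ j = 0 := by
  intro j; fin_cases j <;> simp [banner] <;> decide

lemma banner_10 : banner.Adj 1 0 := by simp [banner]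
lemma banner_30 : banner.Adj 3 0 := by simp [banner]
lemma banner_n13 : ¬ banner.Adj 1 3 := by simp [banner]

lemma bannerc_base : ∀ j : Fin 5, bannerᶜ.Adj 0 j ↔ j = 2 := by
  intro j; fin_cases j <;> simp [banner] <;> decide

lemma bannerc_42 : bannerᶜ.Adj 4 2 := by simp [banner] <;> decide
lemma bannerc_14 : bannerᶜ.Adj 1 4 := by simp [banner] <;> decide
lemma bannerc_34 : bannerᶜ.Adj 3 4 := by simp [banner] <;> decide
lemma bannerc_13 : bannerᶜ.Adj 1 3 := by simp [banner] <;> decide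

lemma chair_base : ∀ j : Fin 5, chair.Adj 3 j ↔ j = 2 := by
  intro j; fin_cases j <;> simp [chair] <;> decide

lemma chair_madj : ∀ i ∈ ({1, 2} : Set (Fin 5)), ∀ j ∈ ({1, 2} : Set (Fin 5)),
    i ≠ j → chair.Adj i j := by
  intro i hi j hj hne
  simp only [Set.mem_insert_iff, Set.mem_singleton_iff] at hi hj
  rcases hi with rfl | rfl <;> rcases hj with rfl | rfl <;>
    first
      | exact absurd rfl hne
      | simp [chair]

lemma chair_eind : ∀ i, i ∉ ({1, 2} : Set (Fin 5)) → ∀ j, j ∉ ({1, 2} : Set (Fin 5)) →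
    ¬ chair.Adj i j := by
  intro i hi j hj
  fin_cases i <;> fin_cases j <;>
    simp_all [chair, Set.mem_insert_iff, Set.mem_singleton_iff]

lemma chair_12 : chair.Adj 1 2 := by simp [chair]

lemma chairc_base : ∀ j : Fin 5, chairᶜ.Adj 1 j ↔ j = 3 := by
  intro j; fin_cases j <;> simp [chair] <;> decide

lemma chairc_madj : ∀ i ∈ ({0, 3, 4} : Set (Fin 5)), ∀ j ∈ ({0, 3, 4} : Set (Fin 5)),
    i ≠ j → chairᶜ.Adj i j := by
  intro i hi j hj hne
  simp only [Set.mem_insert_iff, Set.mem_singleton_iff] at hi hj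
  rcases hi with rfl | rfl | rfl <;> rcases hj with rfl | rfl | rfl <;>
    first
      | exact absurd rfl hne
      | (simp [chair] <;> decide)

lemma chairc_eind : ∀ i, i ∉ ({0, 3, 4} : Set (Fin 5)) → ∀ j, j ∉ ({0, 3, 4} : Set (Fin 5)) →
    ¬ chairᶜ.Adj i j := by
  intro i hi j hj
  fin_cases i <;> fin_cases j <;>
    simp_all [chair, Set.mem_insert_iff, Set.mem_singleton_iff]

lemma chairc_03 : chairᶜ.Adj 0 3 := by simp [chair] <;> decide

end Concrete

/-- If `H = (S, K, R)` is a `G`-spider with nonempty head, where `G` is one of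
the five separable extension graphs `P_4`, `P` (banner), `F` (chair), `complement(P)` and
`complement(F)` (each with its midpoint and endpoint sets), then `H` is not a minimal
`(1,k)`-polar obstruction. -/
theorem stmt_14 {V : Type*} [Fintype V] (k : ℕ) (H : SimpleGraph V) (S K R : Set V)
    (h : IsBaseSpider (pathGraph 4) ({1, 2} : Set (Fin 4)) ({0, 3} : Set (Fin 4)) H S K R ∨
         IsBaseSpider banner ({0, 1, 3} : Set (Fin 5)) ({2, 4} : Set (Fin 5)) H S K R ∨
         IsBaseSpider chair ({1, 2} : Set (Fin 5)) ({0, 3, 4} : Set (Fin 5)) H S K R ∨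
         IsBaseSpider bannerᶜ ({2, 4} : Set (Fin 5)) ({0, 1, 3} : Set (Fin 5)) H S K R ∨
         IsBaseSpider chairᶜ ({0, 3, 4} : Set (Fin 5)) ({1, 2} : Set (Fin 5)) H S K R)
    (hR : R.Nonempty) :
    ¬ MinOneKPolarObstruction k H := by
  rcases h with hc | hc | hc | hc | hc
  · -- P4 spider
    obtain ⟨f, hfi, hAdj, hK, hS, hRdef, hRK, hRS⟩ := hc
    have hRK' : ∀ r ∈ R, ∀ i ∈ ({1, 2} : Set (Fin 4)), H.Adj r (f i) := by
      intro r hr i hi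
      exact hRK r hr (f i) (by rw [hK]; exact ⟨i, hi, rfl⟩)
    have hRS' : ∀ r ∈ R, ¬ H.Adj r (f 3) := by
      intro r hr
      exact hRS r hr (f 3) (by rw [hS]; exact ⟨3, by simp, rfl⟩)
    refine extend_key k H (f 3) (f 2)
      (spider_nbr H (pathGraph 4) f hfi hAdj R hRdef 3 2 hRS' p4_base) ?_
    intro A B hcov hmA hindep htrans hkB
    exact constructive_branch k H (pathGraph 4) ({1, 2} : Set (Fin 4)) f hfi hAdj R hRdef
      hRK' 2 1 3 (by simp) (by simp) p4_madj p4_eind (by decide)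
      p4_12 A B hcov hmA hindep htrans hkB
  · -- banner spider
    obtain ⟨f, hfi, hAdj, hK, hS, hRdef, hRK, hRS⟩ := hc
    have hRK' : ∀ r ∈ R, ∀ i ∈ ({0, 1, 3} : Set (Fin 5)), H.Adj r (f i) := by
      intro r hr i hi
      exact hRK r hr (f i) (by rw [hK]; exact ⟨i, hi, rfl⟩)
    have hRS' : ∀ r ∈ R, ¬ H.Adj r (f 4) := by
      intro r hr
      exact hRS r hr (f 4) (by rw [hS]; exact ⟨4, by simp, rfl⟩)
    refine extend_key k H (f 4) (f 0)
      (spider_nbr H banner f hfi hAdj R hRdef 4 0 hRS' banner_base) ?_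
    intro A B hcov hmA hindep htrans hkB
    exfalso
    obtain ⟨r, hr⟩ := hR
    have hrr : r ∉ Set.range f := by rw [hRdef] at hr; exact hr
    have inB : ∀ v, v ≠ f 4 → H.Adj v (f 0) → v ∈ B := by
      intro v hne hadj
      rcases hcov v hne with hvA | hvB
      · exact absurd hadj (hindep hvA hmA)
      · exact hvB
    have h1B : f 1 ∈ B :=
      inB _ (fun e => absurd (hfi e) (by decide)) ((hAdj 1 0).mpr banner_10)
    have h3B : f 3 ∈ B :=
      inB _ (fun e => absurd (hfi e) (by decide)) ((hAdj 3 0).mpr banner_30)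
    have hrB : r ∈ B := inB r (fun e => hrr (e ▸ ⟨4, rfl⟩)) (hRK' r hr 0 (by simp))
    have h13 : H.Adj (f 1) (f 3) :=
      htrans (f 1) r (f 3) h1B hrB h3B ((hRK' r hr 1 (by simp)).symm)
        (hRK' r hr 3 (by simp)) (fun e => absurd (hfi e) (by decide))
    exact banner_n13 ((hAdj 1 3).mp h13)
  · -- chair spider
    obtain ⟨f, hfi, hAdj, hK, hS, hRdef, hRK, hRS⟩ := hc
    have hRK' : ∀ r ∈ R, ∀ i ∈ ({1, 2} : Set (Fin 5)), H.Adj r (f i) := by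
      intro r hr i hi
      exact hRK r hr (f i) (by rw [hK]; exact ⟨i, hi, rfl⟩)
    have hRS' : ∀ r ∈ R, ¬ H.Adj r (f 3) := by
      intro r hr
      exact hRS r hr (f 3) (by rw [hS]; exact ⟨3, by simp, rfl⟩)
    refine extend_key k H (f 3) (f 2)
      (spider_nbr H chair f hfi hAdj R hRdef 3 2 hRS' chair_base) ?_
    intro A B hcov hmA hindep htrans hkB
    exact constructive_branch k H chair ({1, 2} : Set (Fin 5)) f hfi hAdj R hRdef
      hRK' 2 1 3 (by simp) (by simp) chair_madj chair_eind (by decide)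
      chair_12 A B hcov hmA hindep htrans hkB
  · -- banner complement spider
    obtain ⟨f, hfi, hAdj, hK, hS, hRdef, hRK, hRS⟩ := hc
    have hRK' : ∀ r ∈ R, ∀ i ∈ ({2, 4} : Set (Fin 5)), H.Adj r (f i) := by
      intro r hr i hi
      exact hRK r hr (f i) (by rw [hK]; exact ⟨i, hi, rfl⟩)
    have hRS' : ∀ r ∈ R, ¬ H.Adj r (f 0) := by
      intro r hr
      exact hRS r hr (f 0) (by rw [hS]; exact ⟨0, by simp, rfl⟩)
    refine extend_key k H (f 0) (f 2)
      (spider_nbr H bannerᶜ f hfi hAdj R hRdef 0 2 hRS' bannerc_base) ?_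
    intro A B hcov hmA hindep htrans hkB
    exfalso
    obtain ⟨r, hr⟩ := hR
    have hrr : r ∉ Set.range f := by rw [hRdef] at hr; exact hr
    have inB : ∀ v, v ≠ f 0 → H.Adj v (f 2) → v ∈ B := by
      intro v hne hadj
      rcases hcov v hne with hvA | hvB
      · exact absurd hadj (hindep hvA hmA)
      · exact hvB
    have h4B : f 4 ∈ B :=
      inB _ (fun e => absurd (hfi e) (by decide)) ((hAdj 4 2).mpr bannerc_42)
    have hrB : r ∈ B := inB r (fun e => hrr (e ▸ ⟨0, rfl⟩)) (hRK' r hr 2 (by simp))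
    have h1A : f 1 ∈ A := by
      rcases hcov (f 1) (fun e => absurd (hfi e) (by decide)) with hvA | hvB
      · exact hvA
      · exfalso
        have hadj : H.Adj (f 1) r :=
          htrans (f 1) (f 4) r hvB h4B hrB ((hAdj 1 4).mpr bannerc_14)
            ((hRK' r hr 4 (by simp)).symm) (fun e => hrr (e ▸ ⟨1, rfl⟩))
        exact hRS r hr (f 1) (by rw [hS]; exact ⟨1, by simp, rfl⟩) hadj.symm
    have h3A : f 3 ∈ A := by
      rcases hcov (f 3) (fun e => absurd (hfi e) (by decide)) with hvA | hvB
      · exact hvA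
      · exfalso
        have hadj : H.Adj (f 3) r :=
          htrans (f 3) (f 4) r hvB h4B hrB ((hAdj 3 4).mpr bannerc_34)
            ((hRK' r hr 4 (by simp)).symm) (fun e => hrr (e ▸ ⟨3, rfl⟩))
        exact hRS r hr (f 3) (by rw [hS]; exact ⟨3, by simp, rfl⟩) hadj.symm
    exact hindep h1A h3A ((hAdj 1 3).mpr bannerc_13)
  · -- chair complement spider
    obtain ⟨f, hfi, hAdj, hK, hS, hRdef, hRK, hRS⟩ := hc
    have hRK' : ∀ r ∈ R, ∀ i ∈ ({0, 3, 4} : Set (Fin 5)), H.Adj r (f i) := by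
      intro r hr i hi
      exact hRK r hr (f i) (by rw [hK]; exact ⟨i, hi, rfl⟩)
    have hRS' : ∀ r ∈ R, ¬ H.Adj r (f 1) := by
      intro r hr
      exact hRS r hr (f 1) (by rw [hS]; exact ⟨1, by simp, rfl⟩)
    refine extend_key k H (f 1) (f 3)
      (spider_nbr H chairᶜ f hfi hAdj R hRdef 1 3 hRS' chairc_base) ?_
    intro A B hcov hmA hindep htrans hkB
    exact constructive_branch k H chairᶜ ({0, 3, 4} : Set (Fin 5)) f hfi hAdj R hRdef
      hRK' 3 0 1 (by simp) (by simp) chairc_madj chairc_eind (by decide)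
      chairc_03 A B hcov hmA hindep htrans hkB
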